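/- arXiv:1905.11270 — 2 statements merged into one kernel-verified Lean document; each statement's English description precedes it below -/
import Mathlib

section
/- Define the sequence C(g,n) for nonnegative integers g, n by C(0,3) = 1, C(1,1) = 1, C(g,0) = 0 for all g, and for 2g + n > 2 by the recursion C(g,n+1) = ((n+1)·C(g-1,n+2) + Σ_stable C(g₁,n₁+1)·C(g₂,n₂+1)) · (D+1)^(D+1)/D^D + 2·C(g,n) · (2D+1)^(2D+1)/(27·(2D-2)^(2D-2)), where D = D(g,n+1) = 3g - 1 + 2n and the sum is over g₁+g₂ = g, n₁+n₂ = n with (gᵢ, nᵢ+1) ∉ {(0,1),(0,2)}. Then for all stable (g,n) with n ≥ 1, C(g,n) ≤ t · r^(-g) · s^(-n) · (5g - 5 + 3n)!, where s = (27/80)·e^(-3), r = (14·27/80²)·e^(-4), t = (3⁵/80²)·e^(-4). -/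
open Real Finset

noncomputable def Eu : ℝ := Real.exp 1
noncomputable def Rc : ℝ := (80^2/(14*27)) * Eu^4
noncomputable def Sc : ℝ := (80/27) * Eu^3
noncomputable def Tc : ℝ := (3^5/80^2) / Eu^4
noncomputable def Bb (g m : ℕ) : ℝ := Tc * Rc^g * Sc^m * (Nat.factorial (5*g+3*m-5))

lemma Eu_pos : 0 < Eu := Real.exp_pos 1
lemma Eu_ne : Eu ≠ 0 := Eu_pos.ne'
lemma two_le_Eu : 2 ≤ Eu := by
  have := Real.add_one_le_exp (1:ℝ); rw [Eu]; linarith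
lemma Rc_pos : 0 < Rc := by rw [Rc, Eu]; positivity
lemma Sc_pos : 0 < Sc := by rw [Sc, Eu]; positivity
lemma Tc_pos : 0 < Tc := by rw [Tc, Eu]; positivity
lemma Bb_pos (g m : ℕ) : 0 < Bb g m :=
  mul_pos (mul_pos (mul_pos Tc_pos (pow_pos Rc_pos g)) (pow_pos Sc_pos m))
    (by exact_mod_cast Nat.factorial_pos _)

lemma key1 : Tc * Sc * Eu = 9/80 := by
  have h : Eu ≠ 0 := Eu_ne
  rw [Tc, Sc]; field_simp; ring
lemma key2 : Sc * Eu = 7/40 * Rc := by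
  rw [Sc, Rc]; ring_nf
lemma key3 : Eu^3 = 27/80 * Sc := by rw [Sc]; ring

lemma L1 (m : ℕ) (hm : 1 ≤ m) :
    ((m:ℝ)+1)^(m+1)/(m:ℝ)^m ≤ Eu * ((m:ℝ)+1) := by
  have h0 : (0:ℝ) < m := by exact_mod_cast hm
  have hkey : (((m:ℝ)+1)/m)^m ≤ Eu := by
    have h1 : ((m:ℝ)+1)/m ≤ Real.exp (1/m) := by
      have h2 := Real.add_one_le_exp (1/(m:ℝ))
      calc ((m:ℝ)+1)/m = 1/m + 1 := by field_simp; ring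
        _ ≤ _ := h2
    calc (((m:ℝ)+1)/m)^m ≤ (Real.exp (1/m))^m := by
          apply pow_le_pow_left₀ (by positivity) h1
      _ = Eu := by
          rw [← Real.exp_nat_mul, Eu]
          congr 1
          field_simp
  calc ((m:ℝ)+1)^(m+1)/(m:ℝ)^m = (((m:ℝ)+1)/m)^m * ((m:ℝ)+1) := by
        rw [div_pow, pow_succ]; ring
    _ ≤ Eu * ((m:ℝ)+1) := mul_le_mul_of_nonneg_right hkey (by positivity)

lemma L2 (m : ℕ) (hm : 2 ≤ m) :
    (2*(m:ℝ)+1)^(2*m+1)/(27*(2*(m:ℝ)-2)^(2*m-2)) ≤ Eu^3 * (2*(m:ℝ)+1)^3/27 := by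
  obtain ⟨j, rfl⟩ : ∃ j, m = j+2 := ⟨m-2, by omega⟩
  rw [show 2*(j+2)+1 = (2*j+2)+3 by omega, show 2*(j+2)-2 = 2*j+2 by omega]
  have hc : ((j+2 : ℕ):ℝ) = (j:ℝ)+2 := by push_cast; ring
  rw [hc]
  have hb : (0:ℝ) < 2*(j:ℝ)+2 := by positivity
  have hbase : 2*((j:ℝ)+2)+1 = 2*(j:ℝ)+5 := by ring
  have hbase2 : 2*((j:ℝ)+2)-2 = 2*(j:ℝ)+2 := by ring
  rw [hbase, hbase2]
  have hkey : ((2*(j:ℝ)+5)/(2*(j:ℝ)+2))^(2*j+2) ≤ Eu^3 := by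
    have h1 : (2*(j:ℝ)+5)/(2*(j:ℝ)+2) ≤ Real.exp (3/(2*(j:ℝ)+2)) := by
      have h2 := Real.add_one_le_exp (3/(2*(j:ℝ)+2))
      calc (2*(j:ℝ)+5)/(2*(j:ℝ)+2) = 3/(2*(j:ℝ)+2) + 1 := by field_simp; ring
        _ ≤ _ := h2
    calc ((2*(j:ℝ)+5)/(2*(j:ℝ)+2))^(2*j+2)
        ≤ (Real.exp (3/(2*(j:ℝ)+2)))^(2*j+2) := pow_le_pow_left₀ (by positivity) h1 _
      _ = Real.exp 3 := by
          rw [← Real.exp_nat_mul]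
          congr 1
          have : ((2*j+2 : ℕ):ℝ) = 2*(j:ℝ)+2 := by push_cast; ring
          rw [this]; field_simp
      _ = Eu^3 := by
          rw [Eu, ← Real.exp_nat_mul]; norm_num
  calc (2*(j:ℝ)+5)^((2*j+2)+3)/(27*(2*(j:ℝ)+2)^(2*j+2))
      = ((2*(j:ℝ)+5)/(2*(j:ℝ)+2))^(2*j+2) * ((2*(j:ℝ)+5)^3/27) := by
        rw [pow_add, div_pow]; field_simp
    _ ≤ Eu^3 * ((2*(j:ℝ)+5)^3/27) := mul_le_mul_of_nonneg_right hkey (by positivity)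
    _ = Eu^3 * (2*(j:ℝ)+5)^3/27 := by ring

lemma factmul (a b : ℕ) (ha : 3 ≤ a) (hb : 3 ≤ b) :
    a.factorial * b.factorial ≤ 6 * (a+b-3).factorial := by
  induction b, hb using Nat.le_induction with
  | base =>
      rw [show a+3-3 = a by omega, show Nat.factorial 3 = 6 from rfl]
      exact le_of_eq (Nat.mul_comm _ _)
  | succ b hb ih =>
      rw [show a+(b+1)-3 = (a+b-3)+1 by omega, Nat.factorial_succ, Nat.factorial_succ]
      calc a.factorial * ((b+1)*b.factorial) = (b+1)*(a.factorial*b.factorial) := by ring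
        _ ≤ (b+1)*(6*(a+b-3).factorial) := Nat.mul_le_mul_left _ ih
        _ = 6*((b+1)*(a+b-3).factorial) := by ring
        _ ≤ 6*(((a+b-3)+1)*(a+b-3).factorial) :=
            Nat.mul_le_mul_left 6 (Nat.mul_le_mul_right _ (by omega))

lemma nat1 (s n : ℕ) : 7*((n+1)*(3*s+2*n+3)) ≤ 4*((5*s+3*n+3)*(5*s+3*n+2)) := by nlinarith

lemma nat2 (g n u : ℕ) (hu : 5*g+3*n = u+10) :
    27*((g+1)*(n+1)*(3*g+2*n)) ≤ 16*((u+8)*(u+7)*(u+6)*(u+5)*(u+4)) := by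
  have c1 : 5*(g+1) ≤ u+15 := by omega
  have c2 : 3*(n+1) ≤ u+13 := by omega
  have c3 : 3*g+2*n ≤ u+8 := by omega
  have h5 : 27*((u+15)*(u+13)*(u+8)) ≤ 240*((u+8)*(u+7)*(u+6)*(u+5)*(u+4)) := by
    calc 27*((u+15)*(u+13)*(u+8))
        ≤ 27*((u+15)*(u+13)*(u+8)) +
          (240*u^5 + 7200*u^4 + 85173*u^3 + 495828*u^2 + 1415247*u + 1570680) :=
          Nat.le_add_right _ _
      _ = 240*((u+8)*(u+7)*(u+6)*(u+5)*(u+4)) := by ring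
  have h15 : 15 * (27*((g+1)*(n+1)*(3*g+2*n))) ≤ 15 * (16*((u+8)*(u+7)*(u+6)*(u+5)*(u+4))) := by
    calc 15 * (27*((g+1)*(n+1)*(3*g+2*n))) = 27*((5*(g+1))*(3*(n+1))*(3*g+2*n)) := by ring
      _ ≤ 27*((u+15)*(u+13)*(u+8)) :=
          Nat.mul_le_mul_left 27 (Nat.mul_le_mul (Nat.mul_le_mul c1 c2) c3)
      _ ≤ 240*((u+8)*(u+7)*(u+6)*(u+5)*(u+4)) := h5
      _ = 15 * (16*((u+8)*(u+7)*(u+6)*(u+5)*(u+4))) := by ring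
  exact Nat.le_of_mul_le_mul_left h15 (by norm_num)

lemma nat3 (g n v : ℕ) (hv : 5*g+3*n = v+8) (h3 : 3 ≤ 2*g+n) :
    (6*g+4*n-1)^3 ≤ 20*((v+6)*(v+5)*(v+4)) := by
  have h1 : 6*g+4*n-1 ≤ 2*(v+5) := by omega
  calc (6*g+4*n-1)^3 ≤ (2*(v+5))^3 := Nat.pow_le_pow_left h1 3
    _ ≤ (2*(v+5))^3 + ((12*v^2 + 180*v + 880)*v + 1400) := Nat.le_add_right _ _
    _ = 20*((v+6)*(v+5)*(v+4)) := by ring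

lemma Bb03 : Bb 0 3 = (640/27)*Eu^5 := by
  have h : Eu ≠ 0 := Eu_ne
  rw [Bb, Tc, Sc, Rc]
  norm_num [Nat.factorial]
  field_simp
  ring

lemma Bb11 : Bb 1 1 = (80/7)*Eu^3 := by
  have h : Eu ≠ 0 := Eu_ne
  rw [Bb, Tc, Sc, Rc]
  norm_num [Nat.factorial]
  field_simp
  ring

lemma zpneg4 (x : ℝ) : x ^ (-4:ℤ) = (x^4)⁻¹ := by
  rw [show (-4:ℤ) = -(4:ℤ) by norm_num, zpow_neg, zpow_ofNat]
lemma zpneg3 (x : ℝ) : x ^ (-3:ℤ) = (x^3)⁻¹ := by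
  rw [show (-3:ℤ) = -(3:ℤ) by norm_num, zpow_neg, zpow_ofNat]
lemma zpnegn (x : ℝ) (g : ℕ) : x ^ (-(g:ℤ)) = (x⁻¹)^g := by
  rw [zpow_neg, zpow_natCast, ← inv_pow]

lemma conv (g n : ℕ) :
    ((3 ^ 5 / 80 ^ 2) * Real.exp 1 ^ (-4 : ℤ)) *
      ((14 * 27 / 80 ^ 2) * Real.exp 1 ^ (-4 : ℤ)) ^ (-(g : ℤ)) *
      ((27 / 80) * Real.exp 1 ^ (-3 : ℤ)) ^ (-(n : ℤ)) *
      (Nat.factorial (5 * g + 3 * n - 5) : ℝ) = Bb g n := by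
  have hE : Real.exp 1 ≠ 0 := (Real.exp_pos 1).ne'
  have hEu : Real.exp 1 = Eu := rfl
  rw [zpnegn _ g, zpnegn _ n, zpneg4, zpneg3, Bb, hEu]
  have h1 : (3 ^ 5 / 80 ^ 2 : ℝ) * (Eu^4)⁻¹ = Tc := by rw [Tc]; field_simp
  have h2 : ((14 * 27 / 80 ^ 2 : ℝ) * (Eu^4)⁻¹)⁻¹ = Rc := by
    rw [Rc]; rw [mul_inv, inv_inv]; field_simp
  have h3 : ((27 / 80 : ℝ) * (Eu^3)⁻¹)⁻¹ = Sc := by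
    rw [Sc]; rw [mul_inv, inv_inv]; field_simp
  rw [h1, h2, h3]

/-- Factorial bound on the sequence `C g n` defined by the topological-recursion
bound recursion.  Stability of `(g,n)` means `2g - 2 + n > 0`; `D = D(g,n+1) = 3g - 1 + 2n`;
the sum is over decompositions `g₁+g₂ = g`, `n₁+n₂ = n` (encoded by `(g₁,n₁)`) with both
`(gᵢ, nᵢ+1)` stable. -/
theorem stmt_14 (C : ℕ → ℕ → ℝ)
    (h03 : C 0 3 = 1) (h11 : C 1 1 = 1) (h0 : ∀ g, C g 0 = 0)
    (hrec : ∀ g n : ℕ, 2 < 2 * g + n →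
      C g (n + 1) =
        (((n : ℝ) + 1) * (if g = 0 then 0 else C (g - 1) (n + 2)) +
            ∑ p ∈ ((Finset.range (g + 1)) ×ˢ (Finset.range (n + 1))).filter
              (fun p : ℕ × ℕ =>
                0 < 2 * (p.1 : ℤ) - 2 + (p.2 + 1) ∧
                  0 < 2 * ((g : ℤ) - p.1) - 2 + ((n : ℤ) - p.2 + 1)),
              C p.1 (p.2 + 1) * C (g - p.1) (n - p.2 + 1)) *
          (((3 * g + 2 * n - 1 : ℕ) : ℝ) + 1) ^ (3 * g + 2 * n - 1 + 1) /
            ((3 * g + 2 * n - 1 : ℕ) : ℝ) ^ (3 * g + 2 * n - 1) +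
        2 * C g n *
          (2 * ((3 * g + 2 * n - 1 : ℕ) : ℝ) + 1) ^ (2 * (3 * g + 2 * n - 1) + 1) /
            (27 * (2 * ((3 * g + 2 * n - 1 : ℕ) : ℝ) - 2) ^ (2 * (3 * g + 2 * n - 1) - 2))) :
    ∀ g n : ℕ, 1 ≤ n → 0 < 2 * (g : ℤ) - 2 + n →
      C g n ≤
        ((3 ^ 5 / 80 ^ 2) * Real.exp 1 ^ (-4 : ℤ)) *
          ((14 * 27 / 80 ^ 2) * Real.exp 1 ^ (-4 : ℤ)) ^ (-(g : ℤ)) *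
          ((27 / 80) * Real.exp 1 ^ (-3 : ℤ)) ^ (-(n : ℤ)) *
          Nat.factorial (5 * g + 3 * n - 5) := by
  suffices main : ∀ k g m, 3*g+2*m ≤ k → 1 ≤ m → 3 ≤ 2*g+m → 0 ≤ C g m ∧ C g m ≤ Bb g m by
    intro g n hn hst
    have h3 : 3 ≤ 2*g+n := by omega
    calc C g n ≤ Bb g n := (main (3*g+2*n) g n le_rfl hn h3).2
      _ = _ := (conv g n).symm
  intro k
  induction k with
  | zero => intro g m hk h1 h3; omega
  | succ k ih =>
    intro g m hk h1 h3
    obtain ⟨n, rfl⟩ : ∃ n, m = n+1 := ⟨m-1, by omega⟩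
    by_cases hsmall : 2*g+n ≤ 2
    · have hcase : (g = 0 ∧ n = 2) ∨ (g = 1 ∧ n = 0) := by omega
      rcases hcase with ⟨rfl, rfl⟩ | ⟨rfl, rfl⟩
      · constructor
        · show (0:ℝ) ≤ C 0 3
          rw [h03]; norm_num
        · show C 0 3 ≤ Bb 0 3
          rw [h03, Bb03]
          nlinarith [two_le_Eu, pow_le_pow_left₀ (by norm_num : (0:ℝ) ≤ 2) two_le_Eu 5]
      · constructor
        · show (0:ℝ) ≤ C 1 1
          rw [h11]; norm_num
        · show C 1 1 ≤ Bb 1 1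
          rw [h11, Bb11]
          nlinarith [two_le_Eu, pow_le_pow_left₀ (by norm_num : (0:ℝ) ≤ 2) two_le_Eu 3]
    · have hgn : 2 < 2*g+n := by omega
      rw [hrec g n hgn]
      set Dn := 3*g+2*n-1 with hDn
      set AA := ((n : ℝ) + 1) * (if g = 0 then 0 else C (g - 1) (n + 2)) with hAA
      set SS := ∑ p ∈ ((Finset.range (g + 1)) ×ˢ (Finset.range (n + 1))).filter
              (fun p : ℕ × ℕ =>
                0 < 2 * (p.1 : ℤ) - 2 + (p.2 + 1) ∧
                  0 < 2 * ((g : ℤ) - p.1) - 2 + ((n : ℤ) - p.2 + 1)),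
              C p.1 (p.2 + 1) * C (g - p.1) (n - p.2 + 1) with hSS
      have hL1 := L1 Dn (by omega)
      have hL2 := L2 Dn (by omega)
      have hDnn : (1:ℝ) ≤ (Dn:ℝ) := by exact_mod_cast (by omega : 1 ≤ Dn)
      -- nonnegativity of A
      have hAnn : 0 ≤ AA := by
        rcases Nat.eq_zero_or_pos g with rfl | hgpos
        · rw [hAA]; simp
        · obtain ⟨s, rfl⟩ : ∃ s, g = s+1 := ⟨g-1, by omega⟩
          have ihg := ih s (n+2) (by omega) (by omega) (by omega)
          rw [hAA, if_neg (by omega : ¬ (s+1 = 0)), Nat.add_sub_cancel]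
          exact mul_nonneg (by positivity) ihg.1
      -- facts about every summand
      have hterm : ∀ p ∈ ((Finset.range (g + 1)) ×ˢ (Finset.range (n + 1))).filter
              (fun p : ℕ × ℕ =>
                0 < 2 * (p.1 : ℤ) - 2 + (p.2 + 1) ∧
                  0 < 2 * ((g : ℤ) - p.1) - 2 + ((n : ℤ) - p.2 + 1)),
            0 ≤ C p.1 (p.2 + 1) * C (g - p.1) (n - p.2 + 1) ∧
            C p.1 (p.2 + 1) * C (g - p.1) (n - p.2 + 1) ≤
              Tc^2*Rc^g*Sc^(n+2)*(6*((Nat.factorial (5*g+3*n-7)):ℝ)) := by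
        intro p hp
        simp only [Finset.mem_filter, Finset.mem_product, Finset.mem_range] at hp
        obtain ⟨⟨hp1, hp2⟩, hq1, hq2⟩ := hp
        have ih1 := ih p.1 (p.2+1) (by omega) (by omega) (by omega)
        have ih2 := ih (g-p.1) (n-p.2+1) (by omega) (by omega) (by omega)
        refine ⟨mul_nonneg ih1.1 ih2.1, ?_⟩
        have hB1 : Bb p.1 (p.2+1) = Tc*Rc^(p.1)*Sc^(p.2+1)*((Nat.factorial (5*p.1+3*p.2-2)):ℝ) := by
          rw [Bb, show 5*p.1+3*(p.2+1)-5 = 5*p.1+3*p.2-2 from by omega]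
        have hB2 : Bb (g-p.1) (n-p.2+1) =
            Tc*Rc^(g-p.1)*Sc^(n-p.2+1)*((Nat.factorial (5*(g-p.1)+3*(n-p.2)-2)):ℝ) := by
          rw [Bb, show 5*(g-p.1)+3*(n-p.2+1)-5 = 5*(g-p.1)+3*(n-p.2)-2 from by omega]
        have hfact : (Nat.factorial (5*p.1+3*p.2-2)) * (Nat.factorial (5*(g-p.1)+3*(n-p.2)-2))
            ≤ 6 * Nat.factorial (5*g+3*n-7) := by
          have h1 := factmul (5*p.1+3*p.2-2) (5*(g-p.1)+3*(n-p.2)-2) (by omega) (by omega)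
          have h2 : (5*p.1+3*p.2-2) + (5*(g-p.1)+3*(n-p.2)-2) - 3 = 5*g+3*n-7 := by omega
          rwa [h2] at h1
        have hpow : Rc^(p.1)*Rc^(g-p.1) = Rc^g := by
          rw [← pow_add]; congr 1; omega
        have hpow2 : Sc^(p.2+1)*Sc^(n-p.2+1) = Sc^(n+2) := by
          rw [← pow_add]; congr 1; omega
        calc C p.1 (p.2 + 1) * C (g - p.1) (n - p.2 + 1)
            ≤ Bb p.1 (p.2+1) * Bb (g-p.1) (n-p.2+1) :=
              mul_le_mul ih1.2 ih2.2 ih2.1 (Bb_pos _ _).le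
          _ = Tc^2*Rc^g*Sc^(n+2)*
              (((Nat.factorial (5*p.1+3*p.2-2)) * (Nat.factorial (5*(g-p.1)+3*(n-p.2)-2)) : ℕ):ℝ) := by
              rw [hB1, hB2, ← hpow, ← hpow2]; push_cast; ring
          _ ≤ Tc^2*Rc^g*Sc^(n+2)*(6*((Nat.factorial (5*g+3*n-7)):ℝ)) := by
              apply mul_le_mul_of_nonneg_left _
                (mul_nonneg (mul_nonneg (pow_nonneg Tc_pos.le 2) (pow_nonneg Rc_pos.le g))
                  (pow_nonneg Sc_pos.le (n+2)))
              exact_mod_cast hfact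
      have hSnn : 0 ≤ SS := by
        rw [hSS]; exact Finset.sum_nonneg (fun p hp => (hterm p hp).1)
      -- C g n facts
      have hCnn : 0 ≤ C g n := by
        rcases Nat.eq_zero_or_pos n with rfl | hnpos
        · rw [h0]
        · exact (ih g n (by omega) (by omega) (by omega)).1
      -- bound for the A-term
      have hAbd : AA * (Eu*((Dn:ℝ)+1)) ≤ 1/10 * Bb g (n+1) := by
        rcases Nat.eq_zero_or_pos g with rfl | hgpos
        · have : AA = 0 := by rw [hAA]; simp
          rw [this, zero_mul]
          have := Bb_pos 0 (n+1); linarith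
        · obtain ⟨s, rfl⟩ : ∃ s, g = s+1 := ⟨g-1, by omega⟩
          have ihg := ih s (n+2) (by omega) (by omega) (by omega)
          have hAeq : AA = ((n:ℝ)+1) * C s (n+2) := by
            rw [hAA, if_neg (by omega : ¬ (s+1 = 0)), show (s+1) - 1 = s from by omega]
          have hDr : ((Dn:ℕ):ℝ) + 1 = ((3*s+2*n+3 : ℕ):ℝ) := by
            rw [show Dn = 3*s+2*n+2 from by omega]; push_cast; ring
          have hBs : Bb s (n+2) = Tc*Rc^s*Sc^(n+2)*((Nat.factorial (5*s+3*n+1)):ℝ) := by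
            rw [Bb, show 5*s+3*(n+2)-5 = 5*s+3*n+1 from by omega]
          have hBg : Bb (s+1) (n+1) = Tc*Rc^(s+1)*Sc^(n+1)*((Nat.factorial (5*s+3*n+3)):ℝ) := by
            rw [Bb, show 5*(s+1)+3*(n+1)-5 = 5*s+3*n+3 from by omega]
          have hfac : ((Nat.factorial (5*s+3*n+3)):ℝ) =
              (((5*s+3*n+3)*(5*s+3*n+2) : ℕ):ℝ) * ((Nat.factorial (5*s+3*n+1)):ℝ) := by
            rw [show 5*s+3*n+3 = ((5*s+3*n+1)+1)+1 from by omega,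
              Nat.factorial_succ, Nat.factorial_succ]
            push_cast; ring
          have hP : (0:ℝ) < Tc*Rc^(s+1)*Sc^(n+1)*((Nat.factorial (5*s+3*n+1)):ℝ) :=
            mul_pos (mul_pos (mul_pos Tc_pos (pow_pos Rc_pos _)) (pow_pos Sc_pos _))
              (by exact_mod_cast Nat.factorial_pos _)
          calc AA * (Eu*((Dn:ℝ)+1))
              ≤ ((n:ℝ)+1) * Bb s (n+2) * (Eu*((Dn:ℝ)+1)) := by
                rw [hAeq]
                apply mul_le_mul_of_nonneg_right _ (mul_nonneg Eu_pos.le (by positivity))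
                exact mul_le_mul_of_nonneg_left ihg.2 (by positivity)
            _ = (7/40) * ((((n+1)*(3*s+2*n+3)) : ℕ):ℝ) *
                (Tc*Rc^(s+1)*Sc^(n+1)*((Nat.factorial (5*s+3*n+1)):ℝ)) := by
                rw [hBs, hDr]; push_cast
                linear_combination (((n:ℝ)+1)*(3*(s:ℝ)+2*(n:ℝ)+3)*
                  (Tc*Rc^s*Sc^(n+1)*((Nat.factorial (5*s+3*n+1)):ℝ))) * key2
            _ ≤ (1/10) * Bb (s+1) (n+1) := by
                rw [hBg, hfac]
                have hc : (7/40) * ((((n+1)*(3*s+2*n+3)) : ℕ):ℝ) ≤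
                    (1/10) * ((((5*s+3*n+3)*(5*s+3*n+2)):ℕ):ℝ) := by
                  have h' : ((((n+1)*(3*s+2*n+3)) : ℕ):ℝ) * 7 ≤
                      ((((5*s+3*n+3)*(5*s+3*n+2)):ℕ):ℝ) * 4 := by
                    have := nat1 s n
                    exact_mod_cast (by omega : ((n+1)*(3*s+2*n+3))*7 ≤ (((5*s+3*n+3)*(5*s+3*n+2)))*4)
                  linarith
                calc (7/40) * ((((n+1)*(3*s+2*n+3)) : ℕ):ℝ) *
                    (Tc*Rc^(s+1)*Sc^(n+1)*((Nat.factorial (5*s+3*n+1)):ℝ))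
                    ≤ (1/10) * ((((5*s+3*n+3)*(5*s+3*n+2)):ℕ):ℝ) *
                      (Tc*Rc^(s+1)*Sc^(n+1)*((Nat.factorial (5*s+3*n+1)):ℝ)) :=
                      mul_le_mul_of_nonneg_right hc hP.le
                  _ = 1/10 * (Tc*Rc^(s+1)*Sc^(n+1)*
                      ((((5*s+3*n+3)*(5*s+3*n+2) : ℕ):ℝ) * ((Nat.factorial (5*s+3*n+1)):ℝ))) := by
                      ring
      -- bound for the sum term
      have hSbd : SS * (Eu*((Dn:ℝ)+1)) ≤ 2/5 * Bb g (n+1) := by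
        rcases Finset.eq_empty_or_nonempty (((Finset.range (g + 1)) ×ˢ (Finset.range (n + 1))).filter
              (fun p : ℕ × ℕ =>
                0 < 2 * (p.1 : ℤ) - 2 + (p.2 + 1) ∧
                  0 < 2 * ((g : ℤ) - p.1) - 2 + ((n : ℤ) - p.2 + 1))) with he | ⟨p, hp⟩
        · have : SS = 0 := by rw [hSS, he, Finset.sum_empty]
          rw [this, zero_mul]
          have := Bb_pos g (n+1); linarith
        · have h10 : 10 ≤ 5*g+3*n := by
            simp only [Finset.mem_filter, Finset.mem_product, Finset.mem_range] at hp
            obtain ⟨⟨hp1, hp2⟩, hq1, hq2⟩ := hp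
            omega
          obtain ⟨u, hu⟩ : ∃ u, 5*g+3*n = u+10 := ⟨5*g+3*n-10, by omega⟩
          have hMnn : (0:ℝ) ≤ Tc^2*Rc^g*Sc^(n+2)*(6*((Nat.factorial (5*g+3*n-7)):ℝ)) :=
            mul_nonneg (mul_nonneg (mul_nonneg (pow_nonneg Tc_pos.le 2) (pow_nonneg Rc_pos.le g))
              (pow_nonneg Sc_pos.le (n+2))) (by positivity)
          have hSle : SS ≤ ((((g+1)*(n+1)) : ℕ):ℝ) *
              (Tc^2*Rc^g*Sc^(n+2)*(6*((Nat.factorial (5*g+3*n-7)):ℝ))) := by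
            rw [hSS]
            calc _ ≤ (((Finset.range (g + 1)) ×ˢ (Finset.range (n + 1))).filter
                  (fun p : ℕ × ℕ =>
                    0 < 2 * (p.1 : ℤ) - 2 + (p.2 + 1) ∧
                      0 < 2 * ((g : ℤ) - p.1) - 2 + ((n : ℤ) - p.2 + 1))).card •
                  (Tc^2*Rc^g*Sc^(n+2)*(6*((Nat.factorial (5*g+3*n-7)):ℝ))) :=
                  Finset.sum_le_card_nsmul _ _ _ (fun p hp => (hterm p hp).2)
              _ = ((((Finset.range (g + 1)) ×ˢ (Finset.range (n + 1))).filter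
                  (fun p : ℕ × ℕ =>
                    0 < 2 * (p.1 : ℤ) - 2 + (p.2 + 1) ∧
                      0 < 2 * ((g : ℤ) - p.1) - 2 + ((n : ℤ) - p.2 + 1))).card : ℝ) *
                  (Tc^2*Rc^g*Sc^(n+2)*(6*((Nat.factorial (5*g+3*n-7)):ℝ))) := nsmul_eq_mul _ _
              _ ≤ _ := by
                  apply mul_le_mul_of_nonneg_right _ hMnn
                  have hcard := Finset.card_filter_le ((Finset.range (g + 1)) ×ˢ (Finset.range (n + 1)))
                    (fun p : ℕ × ℕ =>
                      0 < 2 * (p.1 : ℤ) - 2 + (p.2 + 1) ∧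
                        0 < 2 * ((g : ℤ) - p.1) - 2 + ((n : ℤ) - p.2 + 1))
                  rw [Finset.card_product, Finset.card_range, Finset.card_range] at hcard
                  exact_mod_cast hcard
          have hDr : ((Dn:ℕ):ℝ) + 1 = ((3*g+2*n : ℕ):ℝ) := by
            rw [show Dn = 3*g+2*n-1 from hDn, Nat.cast_sub (by omega : 1 ≤ 3*g+2*n)]
            push_cast; ring
          have hMeq : 5*g+3*n-7 = u+3 := by omega
          have hBg : Bb g (n+1) = Tc*Rc^g*Sc^(n+1)*((Nat.factorial (u+8)):ℝ) := by
            rw [Bb, show 5*g+3*(n+1)-5 = u+8 from by omega]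
          have hfac : ((Nat.factorial (u+8)):ℝ) =
              (((u+8)*(u+7)*(u+6)*(u+5)*(u+4) : ℕ):ℝ) * ((Nat.factorial (u+3)):ℝ) := by
            rw [show u+8 = (((((u+3)+1)+1)+1)+1)+1 from by omega]
            rw [Nat.factorial_succ, Nat.factorial_succ, Nat.factorial_succ,
              Nat.factorial_succ, Nat.factorial_succ]
            push_cast; ring
          have hP : (0:ℝ) < Tc*Rc^g*Sc^(n+1)*((Nat.factorial (u+3)):ℝ) :=
            mul_pos (mul_pos (mul_pos Tc_pos (pow_pos Rc_pos _)) (pow_pos Sc_pos _))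
              (by exact_mod_cast Nat.factorial_pos _)
          calc SS * (Eu*((Dn:ℝ)+1))
              ≤ ((((g+1)*(n+1)) : ℕ):ℝ) *
                (Tc^2*Rc^g*Sc^(n+2)*(6*((Nat.factorial (5*g+3*n-7)):ℝ))) * (Eu*((Dn:ℝ)+1)) :=
                mul_le_mul_of_nonneg_right hSle (mul_nonneg Eu_pos.le (by positivity))
            _ = (27/40) * ((((g+1)*(n+1)*(3*g+2*n)) : ℕ):ℝ) *
                (Tc*Rc^g*Sc^(n+1)*((Nat.factorial (u+3)):ℝ)) := by
                rw [hMeq, hDr]; push_cast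
                linear_combination (6*((g:ℝ)+1)*((n:ℝ)+1)*(3*(g:ℝ)+2*(n:ℝ))*
                  (Tc*Rc^g*Sc^(n+1)*((Nat.factorial (u+3)):ℝ))) * key1
            _ ≤ (2/5) * Bb g (n+1) := by
                rw [hBg, hfac]
                have hc : (27/40) * ((((g+1)*(n+1)*(3*g+2*n)) : ℕ):ℝ) ≤
                    (2/5) * ((((u+8)*(u+7)*(u+6)*(u+5)*(u+4)):ℕ):ℝ) := by
                  have h' : ((((g+1)*(n+1)*(3*g+2*n)) : ℕ):ℝ) * 27 ≤
                      ((((u+8)*(u+7)*(u+6)*(u+5)*(u+4)):ℕ):ℝ) * 16 := by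
                    have := nat2 g n u hu
                    exact_mod_cast (by omega :
                      ((g+1)*(n+1)*(3*g+2*n))*27 ≤ (((u+8)*(u+7)*(u+6)*(u+5)*(u+4)))*16)
                  linarith
                calc (27/40) * ((((g+1)*(n+1)*(3*g+2*n)) : ℕ):ℝ) *
                    (Tc*Rc^g*Sc^(n+1)*((Nat.factorial (u+3)):ℝ))
                    ≤ (2/5) * ((((u+8)*(u+7)*(u+6)*(u+5)*(u+4)):ℕ):ℝ) *
                      (Tc*Rc^g*Sc^(n+1)*((Nat.factorial (u+3)):ℝ)) :=
                      mul_le_mul_of_nonneg_right hc hP.le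
                  _ = 2/5 * (Tc*Rc^g*Sc^(n+1)*
                      ((((u+8)*(u+7)*(u+6)*(u+5)*(u+4) : ℕ):ℝ) * ((Nat.factorial (u+3)):ℝ))) := by
                      ring
      -- bound for the C g n term
      have hCbd : (2*C g n) * (Eu^3*(2*((Dn:ℕ):ℝ)+1)^3/27) ≤ 1/2 * Bb g (n+1) := by
        have hfnn : (0:ℝ) ≤ Eu^3*(2*((Dn:ℕ):ℝ)+1)^3/27 := by
          apply div_nonneg _ (by norm_num)
          exact mul_nonneg (pow_nonneg Eu_pos.le 3) (by positivity)
        rcases Nat.eq_zero_or_pos n with rfl | hnpos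
        · rw [h0 g]
          rw [mul_zero, zero_mul]
          have := Bb_pos g (0+1); linarith
        · have ihn := ih g n (by omega) (by omega) (by omega)
          obtain ⟨v, hv⟩ : ∃ v, 5*g+3*n = v+8 := ⟨5*g+3*n-8, by omega⟩
          have hDr : 2*((Dn:ℕ):ℝ)+1 = ((6*g+4*n-1 : ℕ):ℝ) := by
            rw [show (6*g+4*n-1) = 2*Dn+1 from by omega]; push_cast; ring
          have hBn : Bb g n = Tc*Rc^g*Sc^n*((Nat.factorial (v+3)):ℝ) := by
            rw [Bb, show 5*g+3*n-5 = v+3 from by omega]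
          have hBg : Bb g (n+1) = Tc*Rc^g*Sc^(n+1)*((Nat.factorial (v+6)):ℝ) := by
            rw [Bb, show 5*g+3*(n+1)-5 = v+6 from by omega]
          have hfac : ((Nat.factorial (v+6)):ℝ) =
              (((v+6)*(v+5)*(v+4):ℕ):ℝ) * ((Nat.factorial (v+3)):ℝ) := by
            rw [show v+6 = (((v+3)+1)+1)+1 from by omega,
              Nat.factorial_succ, Nat.factorial_succ, Nat.factorial_succ]
            push_cast; ring
          have hP : (0:ℝ) < Tc*Rc^g*Sc^(n+1)*((Nat.factorial (v+3)):ℝ) :=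
            mul_pos (mul_pos (mul_pos Tc_pos (pow_pos Rc_pos _)) (pow_pos Sc_pos _))
              (by exact_mod_cast Nat.factorial_pos _)
          calc (2*C g n) * (Eu^3*(2*((Dn:ℕ):ℝ)+1)^3/27)
              ≤ (2*Bb g n) * (Eu^3*(2*((Dn:ℕ):ℝ)+1)^3/27) := by
                apply mul_le_mul_of_nonneg_right _ hfnn
                linarith [ihn.2]
            _ = (1/40) * (((6*g+4*n-1:ℕ)):ℝ)^3 *
                (Tc*Rc^g*Sc^(n+1)*((Nat.factorial (v+3)):ℝ)) := by
                rw [hBn, hDr]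
                linear_combination (2*Tc*Rc^g*Sc^n*((Nat.factorial (v+3)):ℝ)*
                  (((6*g+4*n-1:ℕ)):ℝ)^3/27) * key3
            _ ≤ (1/2) * Bb g (n+1) := by
                rw [hBg, hfac]
                have hnat := nat3 g n v hv (by omega)
                have hc : (1/40) * (((6*g+4*n-1:ℕ)):ℝ)^3 ≤
                    (1/2) * (((v+6)*(v+5)*(v+4):ℕ):ℝ) := by
                  have h' : ((((6*g+4*n-1)^3 : ℕ)):ℝ) ≤ ((20*((v+6)*(v+5)*(v+4)) : ℕ):ℝ) := by
                    exact_mod_cast hnat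
                  push_cast at h' ⊢
                  linarith
                calc (1/40) * (((6*g+4*n-1:ℕ)):ℝ)^3 *
                    (Tc*Rc^g*Sc^(n+1)*((Nat.factorial (v+3)):ℝ))
                    ≤ (1/2) * (((v+6)*(v+5)*(v+4):ℕ):ℝ) *
                      (Tc*Rc^g*Sc^(n+1)*((Nat.factorial (v+3)):ℝ)) :=
                      mul_le_mul_of_nonneg_right hc hP.le
                  _ = 1/2 * (Tc*Rc^g*Sc^(n+1)*
                      ((((v+6)*(v+5)*(v+4) : ℕ):ℝ) * ((Nat.factorial (v+3)):ℝ))) := by ring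
      constructor
      · have t1 : (0:ℝ) ≤ (AA + SS) * (((Dn:ℕ):ℝ)+1)^(Dn+1) / ((Dn:ℕ):ℝ)^Dn := by
          apply div_nonneg (mul_nonneg (add_nonneg hAnn hSnn) (by positivity)) (by positivity)
        have t2 : (0:ℝ) ≤ 2 * C g n * (2*((Dn:ℕ):ℝ)+1)^(2*Dn+1) /
            (27*(2*((Dn:ℕ):ℝ)-2)^(2*Dn-2)) := by
          apply div_nonneg
          · apply mul_nonneg (by linarith) (by positivity)
          · apply mul_nonneg (by norm_num)
            apply pow_nonneg; linarith
        linarith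
      · calc (AA + SS) * (((Dn:ℕ):ℝ)+1)^(Dn+1) / ((Dn:ℕ):ℝ)^Dn +
            2 * C g n * (2*((Dn:ℕ):ℝ)+1)^(2*Dn+1) / (27*(2*((Dn:ℕ):ℝ)-2)^(2*Dn-2))
            = (AA + SS) * ((((Dn:ℕ):ℝ)+1)^(Dn+1) / ((Dn:ℕ):ℝ)^Dn) +
              (2 * C g n) * ((2*((Dn:ℕ):ℝ)+1)^(2*Dn+1) / (27*(2*((Dn:ℕ):ℝ)-2)^(2*Dn-2))) := by
              ring
          _ ≤ (AA + SS) * (Eu*((Dn:ℝ)+1)) + (2*C g n) * (Eu^3*(2*((Dn:ℕ):ℝ)+1)^3/27) := by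
              apply add_le_add
              · exact mul_le_mul_of_nonneg_left hL1 (add_nonneg hAnn hSnn)
              · exact mul_le_mul_of_nonneg_left hL2 (by linarith)
          _ = AA * (Eu*((Dn:ℝ)+1)) + SS * (Eu*((Dn:ℝ)+1)) +
              (2*C g n) * (Eu^3*(2*((Dn:ℕ):ℝ)+1)^3/27) := by ring
          _ ≤ 1/10 * Bb g (n+1) + 2/5 * Bb g (n+1) + 1/2 * Bb g (n+1) :=
              add_le_add (add_le_add hAbd hSbd) hCbd
          _ = Bb g (n+1) := by ring
end

section
/- With notation as in the recursion for C(g,n), for stable (g,n) with n ≥ 1 one has C(g,n) ≤ 9 · (5g - 5 + 3n)! · e^(4g - 4 + 3n) · 80^(2g - 2 + n) · 3^(3 - 3g - 3n) · 14^(-g), and equivalently C(g,n) ≤ 9 · (5g - 5 + 3n)! · e^(4g - 4 + 3n) · 3^(5g - 5 + n) · 14^(-g). -/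
noncomputable def auxF (a b c d : ℤ) : ℝ :=
  Real.exp 1 ^ a * (80:ℝ) ^ b * (3:ℝ) ^ c * (14:ℝ) ^ d

lemma auxF_pos (a b c d : ℤ) : 0 < auxF a b c d := by
  unfold auxF
  have := Real.exp_pos 1
  positivity

lemma auxF_mul (a b c d a' b' c' d' : ℤ) :
    auxF a b c d * auxF a' b' c' d' = auxF (a+a') (b+b') (c+c') (d+d') := by
  unfold auxF
  rw [zpow_add₀ (Real.exp_ne_zero 1), zpow_add₀ (by norm_num : (80:ℝ) ≠ 0),
    zpow_add₀ (by norm_num : (3:ℝ) ≠ 0), zpow_add₀ (by norm_num : (14:ℝ) ≠ 0)]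
  ring

noncomputable def auxE (g n : ℕ) : ℝ :=
  auxF (4*(g:ℤ)-4+3*(n:ℤ)) (2*(g:ℤ)-2+(n:ℤ)) (3-3*(g:ℤ)-3*(n:ℤ)) (-(g:ℤ))

lemma auxE_pos (g n : ℕ) : 0 < auxE g n := auxF_pos _ _ _ _

lemma auxF1100 : auxF 1 1 0 0 = Real.exp 1 * 80 := by unfold auxF; norm_num

lemma auxF313 : auxF 3 1 (-3) 0 = Real.exp 1 ^ 3 * 80 / 27 := by
  unfold auxF
  rw [show ((-3:ℤ)) = -(3:ℕ) by norm_num, zpow_neg, zpow_natCast,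
    show ((3:ℤ)) = ((3:ℕ):ℤ) by norm_num, zpow_natCast]
  norm_num
  ring

/-- `auxE g n' * (e^3 * 80/27) = auxE g (n'+1)`. -/
lemma auxE_step (g n : ℕ) : auxE g n * (Real.exp 1 ^ 3 * 80 / 27) = auxE g (n+1) := by
  rw [← auxF313]
  unfold auxE; rw [auxF_mul]; congr 1 <;> push_cast <;> ring

/-- dilaton-type identity, for `1 ≤ g`. -/
lemma auxE_dil (g n : ℕ) (hg : 1 ≤ g) :
    auxE (g-1) (n+2) * (Real.exp 1 * 80) = auxE g (n+1) * 14 := by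
  rw [← auxF1100]
  have h14 : (14:ℝ) = auxF 0 0 0 1 := by unfold auxF; norm_num
  rw [h14]
  unfold auxE; rw [auxF_mul, auxF_mul]; congr 1 <;> omega

/-- splitting identity. -/
lemma auxE_split (g n g1 n1 : ℕ) (hg : g1 ≤ g) (hn : n1 ≤ n) :
    auxE g1 (n1+1) * auxE (g-g1) (n-n1+1) =
      auxF (4*(g:ℤ)+3*(n:ℤ)-2) (2*(g:ℤ)+(n:ℤ)-2) (-(3*(g:ℤ))-3*(n:ℤ)) (-(g:ℤ)) := by
  unfold auxE; rw [auxF_mul]; congr 1 <;> omega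

lemma auxE_split_up (g n : ℕ) :
    auxF (4*(g:ℤ)+3*(n:ℤ)-2) (2*(g:ℤ)+(n:ℤ)-2) (-(3*(g:ℤ))-3*(n:ℤ)) (-(g:ℤ)) *
      (Real.exp 1 * 80) = auxE g (n+1) := by
  rw [← auxF1100]
  unfold auxE; rw [auxF_mul]; congr 1 <;> push_cast <;> ring

lemma auxPb (K : ℕ) :
    (((K:ℝ)+4)+1)^(K+4+1) / ((K:ℝ)+4)^(K+4) ≤ Real.exp 1 * (((K:ℝ)+4)+1) := by
  set d : ℝ := (K:ℝ)+4 with hd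
  have hd0 : 0 < d := by positivity
  have h1 : d + 1 ≤ Real.exp (1/d) * d := by
    have h := Real.add_one_le_exp (1/d)
    have h2 := mul_le_mul_of_nonneg_right h hd0.le
    calc d + 1 = (1/d + 1) * d := by field_simp; ring
    _ ≤ Real.exp (1/d) * d := h2
  have key : (d+1)^(K+4) ≤ Real.exp 1 * d^(K+4) := by
    calc (d+1)^(K+4) ≤ (Real.exp (1/d) * d)^(K+4) :=
          pow_le_pow_left₀ (by positivity) h1 _
    _ = Real.exp (1/d)^(K+4) * d^(K+4) := mul_pow _ _ _
    _ = Real.exp 1 * d^(K+4) := by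
        rw [← Real.exp_nat_mul]
        congr 1
        rw [hd]; push_cast
        have hK4 : (K:ℝ)+4 ≠ 0 := by positivity
        field_simp
  rw [div_le_iff₀ (by positivity), pow_succ]
  nlinarith [key, pow_nonneg hd0.le (K+4), pow_nonneg (by positivity : (0:ℝ) ≤ d+1) (K+4)]

lemma auxQb (K : ℕ) :
    (2*((K:ℝ)+4)+1)^(2*(K+4)+1) / (27*(2*((K:ℝ)+4)-2)^(2*K+6)) ≤
      (2*((K:ℝ)+4)+1)^3 * Real.exp 1 ^ 3 / 27 := by
  have hc : 2*((K:ℝ)+4)-2 = ((2*K+6 : ℕ):ℝ) := by push_cast; ring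
  set u : ℝ := 2*((K:ℝ)+4)+1 with hu
  set c : ℝ := 2*((K:ℝ)+4)-2 with hcdef
  have hc0 : 0 < c := by rw [hcdef]; linarith [Nat.cast_nonneg (α := ℝ) K]
  have hu0 : 0 < u := by rw [hu]; positivity
  have h1 : u ≤ Real.exp (3/c) * c := by
    have h := Real.add_one_le_exp (3/c)
    have h2 := mul_le_mul_of_nonneg_right h hc0.le
    calc u = (3/c + 1) * c := by
          rw [hu, hc]; push_cast
          field_simp; ring
    _ ≤ Real.exp (3/c) * c := h2
  have key : u^(2*K+6) ≤ Real.exp 1 ^ 3 * c^(2*K+6) := by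
    calc u^(2*K+6) ≤ (Real.exp (3/c) * c)^(2*K+6) := pow_le_pow_left₀ hu0.le h1 _
    _ = Real.exp (3/c)^(2*K+6) * c^(2*K+6) := mul_pow _ _ _
    _ = Real.exp 1 ^ 3 * c^(2*K+6) := by
        rw [← Real.exp_nat_mul, ← Real.exp_nat_mul]
        congr 1
        push_cast
        have h6 : (2*((K:ℝ)+4)-2) ≠ 0 := by rw [← hcdef]; exact hc0.ne'
        rw [hc]; push_cast
        field_simp
  have hsplit : u^(2*(K+4)+1) = u^3 * u^(2*K+6) := by
    rw [← pow_add]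
    congr 1
    omega
  rw [div_le_div_iff₀ (by positivity) (by norm_num)]
  rw [hsplit]
  nlinarith [key, pow_nonneg hu0.le 3, pow_nonneg hc0.le (2*K+6), pow_pos hu0 3]

lemma auxFact (a b : ℕ) (ha : 3 ≤ a) (hb : 3 ≤ b) :
    Nat.factorial a * Nat.factorial b ≤ 6 * Nat.factorial (a+b-3) := by
  induction b, hb using Nat.le_induction with
  | base =>
    have h : a + 3 - 3 = a := by omega
    rw [h]
    show a.factorial * 6 ≤ 6 * a.factorial
    omega
  | succ b hb ih =>
    have h1 : a + (b+1) - 3 = (a+b-3)+1 := by omega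
    rw [h1, Nat.factorial_succ, Nat.factorial_succ]
    have h2 : b + 1 ≤ a+b-3+1 := by omega
    calc a.factorial * ((b+1) * b.factorial) = (b+1) * (a.factorial * b.factorial) := by ring
    _ ≤ (b+1) * (6 * (a+b-3).factorial) := Nat.mul_le_mul_left _ ih
    _ ≤ (a+b-3+1) * (6 * (a+b-3).factorial) := Nat.mul_le_mul_right _ h2
    _ = 6 * ((a+b-3+1) * (a+b-3).factorial) := by ring

lemma aux_base03 : (1:ℝ) ≤ 9 * (Nat.factorial (5*0+3*3-5) : ℝ) * auxE 0 3 := by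
  have he : (1:ℝ) ≤ Real.exp 1 := by nlinarith [Real.add_one_le_exp (1:ℝ)]
  have h5 : (1:ℝ) ≤ Real.exp 1 ^ (5:ℤ) := one_le_zpow₀ he (by norm_num)
  unfold auxE auxF
  norm_num [Nat.factorial]
  nlinarith [h5, Real.add_one_le_exp (5:ℝ)]

lemma aux_base11 : (1:ℝ) ≤ 9 * (Nat.factorial (5*1+3*1-5) : ℝ) * auxE 1 1 := by
  have he : (1:ℝ) ≤ Real.exp 1 := by nlinarith [Real.add_one_le_exp (1:ℝ)]
  have h3 : (1:ℝ) ≤ Real.exp 1 ^ (3:ℤ) := one_le_zpow₀ he (by norm_num)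
  unfold auxE auxF
  norm_num [Nat.factorial]
  nlinarith [h3, Real.add_one_le_exp (3:ℝ)]

lemma auxFact6 (M : ℕ) :
    (M+6).factorial = (M+6)*((M+5)*((M+4)*((M+3)*((M+2)*(M+1).factorial)))) := by
  simp [Nat.factorial_succ]

lemma auxFact6' (M : ℕ) : (M+6).factorial = (M+6)*((M+5)*((M+4)*(M+3).factorial)) := by
  simp [Nat.factorial_succ]

lemma auxNat2 (g n' K M : ℕ) (hg : g+1 ≤ M+3) (hn : n'+1 ≤ M+4) (hK : K+5 ≤ M+6) :
    486*((g+1)*(n'+1))*((M+1).factorial)*(K+5) ≤ 360*(M+6).factorial := by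
  calc 486*((g+1)*(n'+1))*((M+1).factorial)*(K+5)
      ≤ 486*((M+3)*(M+4))*((M+1).factorial)*(M+6) := by
        refine Nat.mul_le_mul (Nat.mul_le_mul_right _ ?_) hK
        exact Nat.mul_le_mul_left _ (Nat.mul_le_mul hg hn)
  _ = 486*((M+3)*(M+4)*(M+6)*(M+1).factorial) := by ring
  _ ≤ (360*((M+5)*(M+2)))*((M+3)*(M+4)*(M+6)*(M+1).factorial) :=
        Nat.mul_le_mul_right _ (by nlinarith)
  _ = 360*((M+6)*((M+5)*((M+4)*((M+3)*((M+2)*(M+1).factorial))))) := by ring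
  _ = 360*(M+6).factorial := by rw [← auxFact6]

lemma auxNat3 (g n' K M : ℕ) (hK : 3*g+2*n' = K+5) (hM : 5*g+3*n' = M+8) (hk : 3 ≤ 2*g+n') :
    (M+3).factorial * (2*K+9)^3 ≤ 8*(M+6).factorial := by
  have hN3 : (2*K+9)^3 ≤ 8*((M+6)*(M+5)*(M+4)) := by
    rcases Nat.lt_or_ge (2*g+n') 5 with h5 | h5
    · have hcase : (K = 0 ∧ M = 0) ∨ (K = 1 ∧ M = 1) ∨ (K = 1 ∧ M = 2) ∨
          (K = 2 ∧ M = 3) ∨ (K = 3 ∧ M = 4) := by omega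
      rcases hcase with ⟨h1,h2⟩|⟨h1,h2⟩|⟨h1,h2⟩|⟨h1,h2⟩|⟨h1,h2⟩ <;> subst h1 <;> subst h2 <;>
        norm_num
    · have h1 : 2*K+9 ≤ 2*(M+3) := by omega
      calc (2*K+9)^3 ≤ (2*(M+3))^3 := Nat.pow_le_pow_left h1 3
      _ = 8*((M+3)*((M+3)*(M+3))) := by ring
      _ ≤ 8*((M+6)*(M+5)*(M+4)) := Nat.mul_le_mul_left _ (by nlinarith)
  calc (M+3).factorial * (2*K+9)^3 ≤ (M+3).factorial * (8*((M+6)*(M+5)*(M+4))) :=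
        Nat.mul_le_mul_left _ hN3
  _ = 8*((M+6)*((M+5)*((M+4)*(M+3).factorial))) := by ring
  _ = 8*(M+6).factorial := by rw [← auxFact6']

set_option maxHeartbeats 2000000 in
lemma aux_main (C : ℕ → ℕ → ℝ)
    (h03 : C 0 3 = 1) (h11 : C 1 1 = 1) (h0 : ∀ g, C g 0 = 0)
    (hrec : ∀ g n : ℕ, 2 < 2 * g + n →
      C g (n + 1) =
        (((n : ℝ) + 1) * (if g = 0 then 0 else C (g - 1) (n + 2)) +
            ∑ p ∈ ((Finset.range (g + 1)) ×ˢ (Finset.range (n + 1))).filter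
              (fun p : ℕ × ℕ =>
                0 < 2 * (p.1 : ℤ) - 2 + (p.2 + 1) ∧
                  0 < 2 * ((g : ℤ) - p.1) - 2 + ((n : ℤ) - p.2 + 1)),
              C p.1 (p.2 + 1) * C (g - p.1) (n - p.2 + 1)) *
          (((3 * g + 2 * n - 1 : ℕ) : ℝ) + 1) ^ (3 * g + 2 * n - 1 + 1) /
            ((3 * g + 2 * n - 1 : ℕ) : ℝ) ^ (3 * g + 2 * n - 1) +
        2 * C g n *
          (2 * ((3 * g + 2 * n - 1 : ℕ) : ℝ) + 1) ^ (2 * (3 * g + 2 * n - 1) + 1) /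
            (27 * (2 * ((3 * g + 2 * n - 1 : ℕ) : ℝ) - 2) ^ (2 * (3 * g + 2 * n - 1) - 2))) :
    ∀ m g n : ℕ, 2*g+n = m → 1 ≤ n → 3 ≤ 2*g+n →
      0 ≤ C g n ∧ C g n ≤ 9 * (Nat.factorial (5*g+3*n-5) : ℝ) * auxE g n := by
  intro m
  induction m using Nat.strong_induction_on with
  | _ m IH =>
  intro g n hm hn hs
  rcases Nat.lt_or_ge m 4 with h4 | h4
  · -- base cases
    rcases (by omega : (g = 0 ∧ n = 3) ∨ (g = 1 ∧ n = 1)) with ⟨hg,hn'⟩|⟨hg,hn'⟩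
    · subst hg; subst hn'; rw [h03]
      exact ⟨zero_le_one, aux_base03⟩
    · subst hg; subst hn'; rw [h11]
      exact ⟨zero_le_one, aux_base11⟩
  · -- inductive step
    obtain ⟨n', rfl⟩ : ∃ n', n = n'+1 := ⟨n-1, by omega⟩
    have hk : 3 ≤ 2*g+n' := by omega
    have hrec' := hrec g n' (by omega)
    obtain ⟨K, hK⟩ : ∃ K, 3*g+2*n' = K+5 := ⟨3*g+2*n'-5, by omega⟩
    obtain ⟨M, hM⟩ : ∃ M, 5*g+3*n' = M+8 := ⟨5*g+3*n'-8, by omega⟩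
    rw [show 3*g+2*n'-1 = K+4 by omega] at hrec'
    rw [show ((K+4:ℕ):ℝ) = (K:ℝ)+4 by push_cast; ring] at hrec'
    rw [show 2*(K+4)-2 = 2*K+6 by omega] at hrec'
    rw [mul_div_assoc, mul_div_assoc] at hrec'
    set Pr : ℝ := (((K:ℝ)+4)+1)^(K+4+1) / ((K:ℝ)+4)^(K+4) with hPrdef
    set Qr : ℝ := (2*((K:ℝ)+4)+1)^(2*(K+4)+1) / (27*(2*((K:ℝ)+4)-2)^(2*K+6)) with hQrdef
    have hPr0 : 0 ≤ Pr := by rw [hPrdef]; positivity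
    have hQr0 : 0 ≤ Qr := by
      rw [hQrdef]
      apply div_nonneg (by positivity)
      have h26 : (0:ℝ) ≤ 2*((K:ℝ)+4)-2 := by linarith [Nat.cast_nonneg (α := ℝ) K]
      exact mul_nonneg (by norm_num) (pow_nonneg h26 _)
    have hPrb : Pr ≤ Real.exp 1 * (((K:ℝ)+4)+1) := auxPb K
    have hQrb : Qr ≤ (2*((K:ℝ)+4)+1)^3 * Real.exp 1 ^ 3 / 27 := auxQb K
    -- abbreviations for the two main subterms
    set AA : ℝ := ((n' : ℝ) + 1) * (if g = 0 then 0 else C (g - 1) (n' + 2)) with hAAdef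
    set SS : ℝ := ∑ p ∈ ((Finset.range (g + 1)) ×ˢ (Finset.range (n' + 1))).filter
              (fun p : ℕ × ℕ =>
                0 < 2 * (p.1 : ℤ) - 2 + (p.2 + 1) ∧
                  0 < 2 * ((g : ℤ) - p.1) - 2 + ((n' : ℤ) - p.2 + 1)),
              C p.1 (p.2 + 1) * C (g - p.1) (n' - p.2 + 1) with hSSdef
    set EE2 : ℝ := auxF (4*(g:ℤ)+3*(n':ℤ)-2) (2*(g:ℤ)+(n':ℤ)-2) (-(3*(g:ℤ))-3*(n':ℤ)) (-(g:ℤ))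
      with hEE2def
    have hEE2p : 0 < EE2 := by rw [hEE2def]; exact auxF_pos _ _ _ _
    -- nonnegativity and bound for each summand
    have hterm : ∀ p ∈ ((Finset.range (g + 1)) ×ˢ (Finset.range (n' + 1))).filter
              (fun p : ℕ × ℕ =>
                0 < 2 * (p.1 : ℤ) - 2 + (p.2 + 1) ∧
                  0 < 2 * ((g : ℤ) - p.1) - 2 + ((n' : ℤ) - p.2 + 1)),
        0 ≤ C p.1 (p.2 + 1) * C (g - p.1) (n' - p.2 + 1) ∧
        C p.1 (p.2 + 1) * C (g - p.1) (n' - p.2 + 1) ≤ 486*((M+1).factorial:ℝ)*EE2 := by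
      intro p hp
      simp only [Finset.mem_filter, Finset.mem_product, Finset.mem_range] at hp
      obtain ⟨⟨hp1, hp2⟩, hst1, hst2⟩ := hp
      have I1 := IH (2*p.1+(p.2+1)) (by omega) p.1 (p.2+1) rfl (by omega) (by omega)
      have I2 := IH (2*(g-p.1)+((n'-p.2)+1)) (by omega) (g-p.1) ((n'-p.2)+1) rfl (by omega)
        (by omega)
      refine ⟨mul_nonneg I1.1 I2.1, ?_⟩
      have ha3 : 3 ≤ 5*p.1+3*(p.2+1)-5 := by omega
      have hb3 : 3 ≤ 5*(g-p.1)+3*((n'-p.2)+1)-5 := by omega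
      have hfb : (5*p.1+3*(p.2+1)-5) + (5*(g-p.1)+3*((n'-p.2)+1)-5) - 3 = M+1 := by omega
      have hfact := auxFact _ _ ha3 hb3
      rw [hfb] at hfact
      calc C p.1 (p.2 + 1) * C (g - p.1) (n' - p.2 + 1)
          ≤ (9 * ((5*p.1+3*(p.2+1)-5).factorial : ℝ) * auxE p.1 (p.2+1)) *
            (9 * ((5*(g-p.1)+3*((n'-p.2)+1)-5).factorial : ℝ) * auxE (g-p.1) ((n'-p.2)+1)) := by
            exact mul_le_mul I1.2 I2.2 I2.1
              (mul_nonneg (mul_nonneg (by norm_num) (Nat.cast_nonneg _)) (auxE_pos _ _).le)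
      _ = 81 * (((5*p.1+3*(p.2+1)-5).factorial * (5*(g-p.1)+3*((n'-p.2)+1)-5).factorial : ℕ):ℝ)
            * (auxE p.1 (p.2+1) * auxE (g-p.1) ((n'-p.2)+1)) := by push_cast; ring
      _ = 81 * (((5*p.1+3*(p.2+1)-5).factorial * (5*(g-p.1)+3*((n'-p.2)+1)-5).factorial : ℕ):ℝ)
            * EE2 := by
            rw [auxE_split g n' p.1 p.2 (by omega) (by omega), ← hEE2def]
      _ ≤ 81 * ((6*(M+1).factorial : ℕ):ℝ) * EE2 := by
            have := Nat.cast_le (α := ℝ) |>.2 hfact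
            gcongr
      _ = 486*((M+1).factorial:ℝ)*EE2 := by push_cast; ring
    have hS0 : 0 ≤ SS := Finset.sum_nonneg (fun p hp => (hterm p hp).1)
    have hSb : SS ≤ (((g+1)*(n'+1) : ℕ):ℝ) * (486*((M+1).factorial:ℝ)*EE2) := by
      have h1 : SS ≤ (((Finset.range (g + 1)) ×ˢ (Finset.range (n' + 1))).filter
              (fun p : ℕ × ℕ =>
                0 < 2 * (p.1 : ℤ) - 2 + (p.2 + 1) ∧
                  0 < 2 * ((g : ℤ) - p.1) - 2 + ((n' : ℤ) - p.2 + 1))).card •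
            (486*((M+1).factorial:ℝ)*EE2) :=
        Finset.sum_le_card_nsmul _ _ _ (fun p hp => (hterm p hp).2)
      rw [nsmul_eq_mul] at h1
      refine h1.trans ?_
      have hcard : (((Finset.range (g + 1)) ×ˢ (Finset.range (n' + 1))).filter
              (fun p : ℕ × ℕ =>
                0 < 2 * (p.1 : ℤ) - 2 + (p.2 + 1) ∧
                  0 < 2 * ((g : ℤ) - p.1) - 2 + ((n' : ℤ) - p.2 + 1))).card ≤ (g+1)*(n'+1) := by
        refine (Finset.card_filter_le _ _).trans ?_
        rw [Finset.card_product, Finset.card_range, Finset.card_range]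
      have hc := Nat.cast_le (α := ℝ) |>.2 hcard
      gcongr
    -- nonnegativity of the first subterm
    have hA0 : 0 ≤ AA := by
      rw [hAAdef]
      by_cases hg0 : g = 0
      · simp [hg0]
      · have hg1 : 1 ≤ g := by omega
        have I3 := IH (2*(g-1)+(n'+2)) (by omega) (g-1) (n'+2) rfl (by omega) (by omega)
        simp only [hg0, if_false]
        exact mul_nonneg (by positivity) I3.1
    -- nonnegativity of C g n'
    have hC0 : 0 ≤ C g n' := by
      rcases Nat.eq_zero_or_pos n' with h|h
      · subst h; rw [h0 g]
      · exact (IH (2*g+n') (by omega) g n' rfl h (by omega)).1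
    -- term 1 bound
    have hT1 : AA * Pr ≤ (63/40) * ((M+6).factorial:ℝ) * auxE g (n'+1) := by
      by_cases hg0 : g = 0
      · have : AA = 0 := by rw [hAAdef]; simp [hg0]
        rw [this, zero_mul]
        exact mul_nonneg (by positivity) (auxE_pos _ _).le
      · have hg1 : 1 ≤ g := by omega
        have I3 := IH (2*(g-1)+(n'+2)) (by omega) (g-1) (n'+2) rfl (by omega) (by omega)
        rw [show 5*(g-1)+3*(n'+2)-5 = M+4 by omega] at I3
        have hdil := auxE_dil g n' hg1
        have hXe : auxE (g-1) (n'+2) * Real.exp 1 = auxE g (n'+1) * 14/80 := by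
          linear_combination (1/80) * hdil
        have hAb : AA ≤ ((n':ℝ)+1) * (9 * ((M+4).factorial:ℝ) * auxE (g-1) (n'+2)) := by
          rw [hAAdef]
          simp only [hg0, if_false]
          exact mul_le_mul_of_nonneg_left I3.2 (by positivity)
        calc AA * Pr ≤ AA * (Real.exp 1 * (((K:ℝ)+4)+1)) :=
              mul_le_mul_of_nonneg_left hPrb hA0
        _ ≤ (((n':ℝ)+1) * (9 * ((M+4).factorial:ℝ) * auxE (g-1) (n'+2))) *
              (Real.exp 1 * (((K:ℝ)+4)+1)) :=
              mul_le_mul_of_nonneg_right hAb (by positivity)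
        _ = (63/40) * (((n':ℝ)+1)*(((K:ℝ)+4)+1)*((M+4).factorial:ℝ)) * auxE g (n'+1) := by
              linear_combination (9*((n':ℝ)+1)*((M+4).factorial:ℝ)*(((K:ℝ)+4)+1)) * hXe
        _ ≤ (63/40) * ((M+6).factorial:ℝ) * auxE g (n'+1) := by
              have hnat : (n'+1)*(K+5)*(M+4).factorial ≤ (M+6).factorial := by
                have hfac : (M+6).factorial = (M+6)*((M+5)*(M+4).factorial) := rfl
                calc (n'+1)*(K+5)*(M+4).factorial ≤ ((M+5)*(M+6))*(M+4).factorial :=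
                    Nat.mul_le_mul_right _ (Nat.mul_le_mul (by omega) (by omega))
                _ = (M+6)*((M+5)*(M+4).factorial) := by ring
                _ = (M+6).factorial := by rw [← hfac]
              have hc := Nat.cast_le (α := ℝ) |>.2 hnat
              push_cast at hc
              have h1 : ((n':ℝ)+1)*(((K:ℝ)+4)+1)*((M+4).factorial:ℝ) ≤ ((M+6).factorial:ℝ) := by
                linarith [hc]
              gcongr
              exact (auxE_pos _ _).le
    -- term 2 bound
    have hT2 : SS * Pr ≤ (9/2) * ((M+6).factorial:ℝ) * auxE g (n'+1) := by
      have hsplitup := auxE_split_up g n'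
      rw [← hEE2def] at hsplitup
      have hXe2 : EE2 * Real.exp 1 = auxE g (n'+1) / 80 := by
        linear_combination (1/80) * hsplitup
      have hnat2 : 486*((g+1)*(n'+1))*((M+1).factorial)*(K+5) ≤ 360*(M+6).factorial :=
        auxNat2 g n' K M (by omega) (by omega) (by omega)
      calc SS * Pr ≤ ((((g+1)*(n'+1) : ℕ):ℝ) * (486*((M+1).factorial:ℝ)*EE2)) *
            (Real.exp 1 * (((K:ℝ)+4)+1)) := by
            refine mul_le_mul hSb hPrb hPr0 ?_
            exact mul_nonneg (Nat.cast_nonneg _)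
              (mul_nonneg (mul_nonneg (by norm_num) (Nat.cast_nonneg _)) hEE2p.le)
      _ = (486*(((g+1)*(n'+1):ℕ):ℝ)*((M+1).factorial:ℝ)*(((K:ℝ)+4)+1)) * (EE2 * Real.exp 1) := by
            ring
      _ = (486*(((g+1)*(n'+1):ℕ):ℝ)*((M+1).factorial:ℝ)*(((K:ℝ)+4)+1)) *
            (auxE g (n'+1) / 80) := by rw [hXe2]
      _ ≤ (9/2) * ((M+6).factorial:ℝ) * auxE g (n'+1) := by
            have hc := Nat.cast_le (α := ℝ) |>.2 hnat2
            push_cast at hc ⊢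
            nlinarith [mul_le_mul_of_nonneg_right hc (auxE_pos g (n'+1)).le,
              (auxE_pos g (n'+1)).le]
    -- term 3 bound
    have hT3 : 2 * C g n' * Qr ≤ (9/5) * ((M+6).factorial:ℝ) * auxE g (n'+1) := by
      have hCb : C g n' ≤ 9 * ((M+3).factorial:ℝ) * auxE g n' := by
        rcases Nat.eq_zero_or_pos n' with h|h
        · subst h; rw [h0 g]; exact mul_nonneg (by positivity) (auxE_pos _ _).le
        · have I4 := (IH (2*g+n') (by omega) g n' rfl h (by omega)).2
          rw [show 5*g+3*n'-5 = M+3 by omega] at I4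
          exact I4
      have hstep := auxE_step g n'
      have hXe3 : auxE g n' * Real.exp 1 ^ 3 = auxE g (n'+1) * 27/80 := by
        linear_combination (27/80) * hstep
      have hnat3 : (M+3).factorial * (2*K+9)^3 ≤ 8 * (M+6).factorial :=
        auxNat3 g n' K M hK hM hk
      have hu9 : 2*((K:ℝ)+4)+1 = ((2*K+9 : ℕ):ℝ) := by push_cast; ring
      calc 2 * C g n' * Qr ≤ 2 * C g n' * ((2*((K:ℝ)+4)+1)^3 * Real.exp 1 ^ 3 / 27) := by
            refine mul_le_mul_of_nonneg_left hQrb (by linarith)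
      _ ≤ 2 * (9 * ((M+3).factorial:ℝ) * auxE g n') *
            ((2*((K:ℝ)+4)+1)^3 * Real.exp 1 ^ 3 / 27) := by
            have hpos : (0:ℝ) ≤ (2*((K:ℝ)+4)+1)^3 * Real.exp 1 ^ 3 / 27 := by positivity
            nlinarith [mul_le_mul_of_nonneg_right hCb hpos]
      _ = (18/27) * ((M+3).factorial:ℝ) * ((2*((K:ℝ)+4)+1)^3) *
            (auxE g n' * Real.exp 1 ^ 3) := by ring
      _ = (18/27) * ((M+3).factorial:ℝ) * ((2*((K:ℝ)+4)+1)^3) *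
            (auxE g (n'+1) * 27/80) := by rw [hXe3]
      _ = (9/40) * (((M+3).factorial * (2*K+9)^3 : ℕ):ℝ) * auxE g (n'+1) := by
            rw [hu9]; push_cast; ring
      _ ≤ (9/5) * ((M+6).factorial:ℝ) * auxE g (n'+1) := by
            have hc := Nat.cast_le (α := ℝ) |>.2 hnat3
            push_cast at hc ⊢
            nlinarith [mul_le_mul_of_nonneg_right hc (auxE_pos g (n'+1)).le]
    -- assemble
    rw [show 5*g+3*(n'+1)-5 = M+6 by omega]
    constructor
    · rw [hrec']
      have h1 : 0 ≤ (AA + SS) * Pr := mul_nonneg (add_nonneg hA0 hS0) hPr0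
      have h2 : 0 ≤ 2 * C g n' * Qr := mul_nonneg (by linarith) hQr0
      linarith
    · rw [hrec']
      have hexp : (AA + SS) * Pr = AA * Pr + SS * Pr := add_mul _ _ _
      have hFE : 0 ≤ ((M+6).factorial:ℝ) * auxE g (n'+1) :=
        mul_nonneg (Nat.cast_nonneg _) (auxE_pos _ _).le
      rw [hexp]
      nlinarith [hT1, hT2, hT3, hFE]


/-- The second factorial bound on the sequence `C g n` from the topological-recursion
bound recursion, together with its equivalent rewriting. -/
theorem stmt_15 (C : ℕ → ℕ → ℝ)
    (h03 : C 0 3 = 1) (h11 : C 1 1 = 1) (h0 : ∀ g, C g 0 = 0)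
    (hrec : ∀ g n : ℕ, 2 < 2 * g + n →
      C g (n + 1) =
        (((n : ℝ) + 1) * (if g = 0 then 0 else C (g - 1) (n + 2)) +
            ∑ p ∈ ((Finset.range (g + 1)) ×ˢ (Finset.range (n + 1))).filter
              (fun p : ℕ × ℕ =>
                0 < 2 * (p.1 : ℤ) - 2 + (p.2 + 1) ∧
                  0 < 2 * ((g : ℤ) - p.1) - 2 + ((n : ℤ) - p.2 + 1)),
              C p.1 (p.2 + 1) * C (g - p.1) (n - p.2 + 1)) *
          (((3 * g + 2 * n - 1 : ℕ) : ℝ) + 1) ^ (3 * g + 2 * n - 1 + 1) /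
            ((3 * g + 2 * n - 1 : ℕ) : ℝ) ^ (3 * g + 2 * n - 1) +
        2 * C g n *
          (2 * ((3 * g + 2 * n - 1 : ℕ) : ℝ) + 1) ^ (2 * (3 * g + 2 * n - 1) + 1) /
            (27 * (2 * ((3 * g + 2 * n - 1 : ℕ) : ℝ) - 2) ^ (2 * (3 * g + 2 * n - 1) - 2))) :
    ∀ g n : ℕ, 1 ≤ n → 0 < 2 * (g : ℤ) - 2 + n →
      C g n ≤
        9 * Nat.factorial (5 * g + 3 * n - 5) *
          Real.exp 1 ^ (4 * (g : ℤ) - 4 + 3 * n) *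
          (80 : ℝ) ^ (2 * (g : ℤ) - 2 + n) *
          (3 : ℝ) ^ (3 - 3 * (g : ℤ) - 3 * n) *
          (14 : ℝ) ^ (-(g : ℤ)) ∧
      C g n ≤
        9 * Nat.factorial (5 * g + 3 * n - 5) *
          Real.exp 1 ^ (4 * (g : ℤ) - 4 + 3 * n) *
          (3 : ℝ) ^ (5 * (g : ℤ) - 5 + n) *
          (14 : ℝ) ^ (-(g : ℤ)) := by
  intro g n hn hstab
  have H := aux_main C h03 h11 h0 hrec (2*g+n) g n rfl hn (by omega)
  have hexp := Real.exp_pos 1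
  have h1 : C g n ≤
      9 * Nat.factorial (5 * g + 3 * n - 5) *
        Real.exp 1 ^ (4 * (g : ℤ) - 4 + 3 * n) *
        (80 : ℝ) ^ (2 * (g : ℤ) - 2 + n) *
        (3 : ℝ) ^ (3 - 3 * (g : ℤ) - 3 * n) *
        (14 : ℝ) ^ (-(g : ℤ)) := by
    refine H.2.trans (le_of_eq ?_)
    unfold auxE auxF
    ring
  refine ⟨h1, h1.trans ?_⟩
  obtain ⟨k, hk⟩ : ∃ k : ℕ, 2*(g:ℤ)-2+(n:ℤ) = (k:ℤ) := ⟨(2*(g:ℤ)-2+(n:ℤ)).toNat, by omega⟩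
  have hkey : (80:ℝ) ^ (2*(g:ℤ)-2+(n:ℤ)) * (3:ℝ) ^ (3-3*(g:ℤ)-3*(n:ℤ)) ≤
      (3:ℝ) ^ (5*(g:ℤ)-5+(n:ℤ)) := by
    calc (80:ℝ) ^ (2*(g:ℤ)-2+(n:ℤ)) * (3:ℝ) ^ (3-3*(g:ℤ)-3*(n:ℤ))
        = (80:ℝ)^(k:ℕ) * (3:ℝ) ^ (3-3*(g:ℤ)-3*(n:ℤ)) := by rw [hk, zpow_natCast]
    _ ≤ (81:ℝ)^(k:ℕ) * (3:ℝ) ^ (3-3*(g:ℤ)-3*(n:ℤ)) := by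
        refine mul_le_mul_of_nonneg_right (pow_le_pow_left₀ (by norm_num) (by norm_num) k) ?_
        positivity
    _ = (3:ℝ)^((4*k:ℕ)) * (3:ℝ) ^ (3-3*(g:ℤ)-3*(n:ℤ)) := by
        rw [show (81:ℝ) = 3^(4:ℕ) by norm_num, ← pow_mul]
    _ = (3:ℝ)^(((4*k:ℕ):ℤ)) * (3:ℝ) ^ (3-3*(g:ℤ)-3*(n:ℤ)) := by rw [zpow_natCast]
    _ = (3:ℝ)^(((4*k:ℕ):ℤ)+(3-3*(g:ℤ)-3*(n:ℤ))) := (zpow_add₀ (by norm_num) _ _).symm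
    _ = (3:ℝ)^(5*(g:ℤ)-5+(n:ℤ)) := by
        congr 1
        omega
  calc 9 * (Nat.factorial (5 * g + 3 * n - 5):ℝ) *
        Real.exp 1 ^ (4 * (g : ℤ) - 4 + 3 * n) *
        (80 : ℝ) ^ (2 * (g : ℤ) - 2 + n) *
        (3 : ℝ) ^ (3 - 3 * (g : ℤ) - 3 * n) *
        (14 : ℝ) ^ (-(g : ℤ))
      = (9 * (Nat.factorial (5 * g + 3 * n - 5):ℝ) *
          Real.exp 1 ^ (4 * (g : ℤ) - 4 + 3 * n) * (14 : ℝ) ^ (-(g : ℤ))) *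
        ((80 : ℝ) ^ (2 * (g : ℤ) - 2 + n) * (3 : ℝ) ^ (3 - 3 * (g : ℤ) - 3 * n)) := by ring
  _ ≤ (9 * (Nat.factorial (5 * g + 3 * n - 5):ℝ) *
          Real.exp 1 ^ (4 * (g : ℤ) - 4 + 3 * n) * (14 : ℝ) ^ (-(g : ℤ))) *
        ((3:ℝ) ^ (5*(g:ℤ)-5+(n:ℤ))) := by
        refine mul_le_mul_of_nonneg_left hkey ?_
        positivity
  _ = 9 * (Nat.factorial (5 * g + 3 * n - 5):ℝ) *
        Real.exp 1 ^ (4 * (g : ℤ) - 4 + 3 * n) *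
        (3 : ℝ) ^ (5 * (g : ℤ) - 5 + n) *
        (14 : ℝ) ^ (-(g : ℤ)) := by ring
end
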